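/- (Poisson-type summation formula in the 2D-DT-NS-LCT domain) For a sequence c ∈ l¹(ℤ²) and a non-singular 2×2 integer matrix M with m = |det(M)| and coset representatives γ₀ = 0, γ₁, …, γ_{m−1} of ℤ²/Mℤ², one has for all ξ: (m/√det(iB)) · F[S_M(c·λ_M)](ξ) = Σ_{k=0}^{m−1} e^{−iπ [BM⁻¹(ξ+γ_k)]ᵀ D M⁻¹ (ξ+γ_k)} (L_M c)(BM⁻¹(ξ+γ_k)), where (S_M d)(k) = d(Mᵀk), λ_M(n) = e^{iπ nᵀB⁻¹An}, and F is the discrete-time Fourier transform (F d)(ξ) = Σ_{k∈ℤ²} d(k) e^{−2iπ kᵀξ}. -/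

import Mathlib

open MeasureTheory Matrix Complex

noncomputable section

abbrev V2 : Type := Fin 2 → ℝ
abbrev Z2 : Type := Fin 2 → ℤ
abbrev M2 : Type := Matrix (Fin 2) (Fin 2) ℝ

/-- cast an integer vector to a real vector -/
def zc (k : Z2) : V2 := fun i => (k i : ℝ)

/-- `ePi r = e^{iπ r}` -/
def ePi (r : ℝ) : ℂ := Complex.exp (Real.pi * Complex.I * r)

/-- quadratic/bilinear form `xᵀ P y` -/
def Q (P : M2) (x y : V2) : ℝ := x ⬝ᵥ P.mulVec y

/-- `√(det (iB))` (note `det(iB) = i² det B` for 2×2 `B`) -/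
def sdet (B : M2) : ℂ := ((Complex.I ^ 2 * (B.det : ℂ))) ^ ((1 : ℂ)/2)

/-- the chirp `λ_M(t) = e^{iπ tᵀB⁻¹At}` -/
def lam (A B : M2) (t : V2) : ℂ := ePi (Q (B⁻¹ * A) t t)

/-- the continuous 2D non-separable LCT -/
def LCT (A B D : M2) (f : V2 → ℂ) (ξ : V2) : ℂ :=
  (sdet B)⁻¹ * ∫ u : V2, f u * ePi (Q (B⁻¹ * A) u u - 2 * Q B⁻¹ u ξ + Q (D * B⁻¹) ξ ξ)

/-- the 2D discrete-time non-separable LCT -/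
def DLCT (A B D : M2) (s : Z2 → ℂ) (ξ : V2) : ℂ :=
  (sdet B)⁻¹ * ∑' k : Z2,
    s k * ePi (Q (B⁻¹ * A) (zc k) (zc k) - 2 * Q B⁻¹ (zc k) ξ + Q (D * B⁻¹) ξ ξ)

/-- the canonical (continuous) convolution `⋆_c` -/
def cconv (A B : M2) (f g : V2 → ℂ) (t : V2) : ℂ :=
  ePi (-(Q (B⁻¹ * A) t t)) * (sdet B)⁻¹ *
    ∫ x : V2, lam A B (t - x) * f (t - x) * (lam A B x * g x)

/-- the canonical semi-discrete convolution `⋆_{sd}` -/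
def sdconv (A B : M2) (s : Z2 → ℂ) (g : V2 → ℂ) (t : V2) : ℂ :=
  ePi (-(Q (B⁻¹ * A) t t)) * (sdet B)⁻¹ *
    ∑' k : Z2, lam A B (zc k) * s k * (lam A B (t - zc k) * g (t - zc k))

/-- the canonical discrete convolution `⋆_d` -/
def dconv (A B : M2) (s c : Z2 → ℂ) (l : Z2) : ℂ :=
  ePi (-(Q (B⁻¹ * A) (zc l) (zc l))) * (sdet B)⁻¹ *
    ∑' k : Z2, lam A B (zc k) * s k * (lam A B (zc (l - k)) * c (l - k))

/-- symplecticity of the block matrix `[A,B;C,D]` -/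
def Symp (A B C D : M2) : Prop :=
  A * Bᵀ = B * Aᵀ ∧ C * Dᵀ = D * Cᵀ ∧ A * Dᵀ - B * Cᵀ = 1

/-- the unit half-open square `[0,1)²` -/
def box : Set V2 := Set.univ.pi fun _ => Set.Ico (0:ℝ) 1

/-- real cast of an integer matrix -/
def Mr (M : Matrix (Fin 2) (Fin 2) ℤ) : M2 := M.map (Int.cast : ℤ → ℝ)

/-- the set `N(M)` of integer points in the fundamental parallelepiped -/
def NM (M : Matrix (Fin 2) (Fin 2) ℤ) : Set Z2 :=
  {k : Z2 | ∃ x : V2, x ∈ box ∧ zc k = (Mr M).mulVec x}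

/-- the discrete time Fourier transform -/
def DTFT (d : Z2 → ℂ) (ξ : V2) : ℂ := ∑' k : Z2, d k * ePi (-(2 * (zc k ⬝ᵥ ξ)))


/-! ### Auxiliary lemmas -/

lemma ePi_add' (a b : ℝ) : ePi (a + b) = ePi a * ePi b := by
  rw [ePi, ePi, ePi, ← Complex.exp_add]; push_cast; ring_nf

lemma ePi_zero' : ePi 0 = 1 := by simp [ePi]

lemma norm_ePi' (r : ℝ) : ‖ePi r‖ = 1 := by
  have : (Real.pi : ℂ) * Complex.I * r = (Real.pi * r : ℝ) * Complex.I := by push_cast; ring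
  rw [ePi, this, Complex.norm_exp_ofReal_mul_I]

lemma ePi_neg_two_int' (n : ℤ) : ePi (-(2 * (n : ℝ))) = 1 := by
  rw [ePi]
  have : (Real.pi : ℂ) * Complex.I * ((-(2 * (n : ℝ)) : ℝ) : ℂ)
      = (-n : ℤ) * (2 * Real.pi * Complex.I) := by push_cast; ring
  rw [this, Complex.exp_int_mul_two_pi_mul_I]

lemma ePi_eq_one_iff' (r : ℝ) : ePi (-(2 * r)) = 1 ↔ ∃ n : ℤ, r = n := by
  rw [ePi, Complex.exp_eq_one_iff]
  have hπI : (Real.pi : ℂ) * Complex.I ≠ 0 :=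
    mul_ne_zero (by exact_mod_cast Real.pi_ne_zero) Complex.I_ne_zero
  constructor
  · rintro ⟨n, hn⟩
    refine ⟨-n, ?_⟩
    have h : ((-(2 * r) : ℝ) : ℂ) = 2 * n :=
      mul_left_cancel₀ hπI (hn.trans (by ring))
    have h2 : -(2 * r) = 2 * (n : ℝ) := by exact_mod_cast h
    push_cast
    linarith
  · rintro ⟨n, rfl⟩
    exact ⟨-n, by push_cast; ring⟩

lemma zc_add' (a b : Z2) : zc (a + b) = zc a + zc b := by
  funext i; simp [zc]

lemma zc_mulVec' (M : Matrix (Fin 2) (Fin 2) ℤ) (q : Z2) :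
    zc (M.mulVec q) = (Mr M).mulVec (zc q) := by
  funext i; simp [zc, Mr, Matrix.mulVec, dotProduct]

lemma zc_inj' : Function.Injective zc := by
  intro a b h
  funext i
  have h2 : (a i : ℝ) = (b i : ℝ) := congrFun h i
  exact_mod_cast h2

lemma Mr_det' (M : Matrix (Fin 2) (Fin 2) ℤ) : (Mr M).det = (M.det : ℝ) := by
  rw [Mr]
  exact (RingHom.map_det (Int.castRingHom ℝ) M).symm

lemma Mr_transpose' (M : Matrix (Fin 2) (Fin 2) ℤ) : Mr (Mᵀ) = (Mr M)ᵀ := by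
  simp [Mr, Matrix.transpose_map]

lemma zc_dot' (a b : Z2) : zc a ⬝ᵥ zc b = ((a ⬝ᵥ b : ℤ) : ℝ) := by
  simp [zc, dotProduct]

lemma dot_reduce' (M : Matrix (Fin 2) (Fin 2) ℤ) (hMu : IsUnit (Mr M).det)
    (k : Z2) (x : V2) :
    zc (Mᵀ.mulVec k) ⬝ᵥ (Mr M)⁻¹.mulVec x = zc k ⬝ᵥ x := by
  rw [zc_mulVec', Mr_transpose', Matrix.mulVec_transpose, Matrix.dotProduct_mulVec,
    Matrix.vecMul_vecMul, Matrix.mul_nonsing_inv _ hMu, Matrix.vecMul_one]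

open scoped Classical in
lemma char_sum' (M : Matrix (Fin 2) (Fin 2) ℤ) (hM : M.det ≠ 0)
    (m : ℕ) (γ : Fin m → Z2)
    (hγ : ∀ n : Z2, ∃! p : Fin m × Z2, n = γ p.1 + M.mulVec p.2)
    (n : Z2) :
    ∑ j : Fin m, ePi (-(2 * (zc n ⬝ᵥ (Mr M)⁻¹.mulVec (zc (γ j))))) =
      if ∃ k : Z2, n = Mᵀ.mulVec k then (m : ℂ) else 0 := by
  have hMr : (Mr M).det ≠ 0 := by rw [Mr_det']; exact_mod_cast hM
  have hMu : IsUnit (Mr M).det := isUnit_iff_ne_zero.2 hMr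
  set χ : Z2 → ℂ := fun x => ePi (-(2 * (zc n ⬝ᵥ (Mr M)⁻¹.mulVec (zc x)))) with hχ
  have χ_add : ∀ x y, χ (x + y) = χ x * χ y := by
    intro x y
    rw [hχ]
    simp only
    rw [← ePi_add']
    congr 1
    rw [zc_add', Matrix.mulVec_add, dotProduct_add]
    ring
  have χ_M : ∀ q, χ (M.mulVec q) = 1 := by
    intro q
    have h1 : (Mr M)⁻¹.mulVec (zc (M.mulVec q)) = zc q := by
      rw [zc_mulVec', Matrix.mulVec_mulVec, Matrix.nonsing_inv_mul _ hMu, Matrix.one_mulVec]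
    show ePi _ = 1
    rw [h1, zc_dot', ePi_neg_two_int']
  by_cases hn : ∃ k : Z2, n = Mᵀ.mulVec k
  · rw [if_pos hn]
    show ∑ j : Fin m, χ (γ j) = (m : ℂ)
    obtain ⟨k, rfl⟩ := hn
    have hterm : ∀ j, χ (γ j) = 1 := by
      intro j
      show ePi _ = 1
      rw [dot_reduce' M hMu, zc_dot', ePi_neg_two_int']
    calc ∑ j : Fin m, χ (γ j) = ∑ _j : Fin m, (1 : ℂ) :=
          Finset.sum_congr rfl fun j _ => hterm j
      _ = (m : ℂ) := by simp
  · rw [if_neg hn]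
    show ∑ j : Fin m, χ (γ j) = 0
    set w : V2 := Matrix.vecMul (zc n) (Mr M)⁻¹ with hw
    have hne : ∃ i : Fin 2, ∀ z : ℤ, w i ≠ (z : ℝ) := by
      by_contra hcon
      push_neg at hcon
      choose k hk using hcon
      apply hn
      refine ⟨k, ?_⟩
      apply zc_inj'
      have hwk : w = zc k := by funext i; exact hk i
      have hvm : Matrix.vecMul w (Mr M) = zc n := by
        rw [hw, Matrix.vecMul_vecMul, Matrix.nonsing_inv_mul _ hMu, Matrix.vecMul_one]
      rw [zc_mulVec', Mr_transpose', Matrix.mulVec_transpose, ← hwk, hvm]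
    obtain ⟨i, hi⟩ := hne
    set x0 : Z2 := Pi.single i 1 with hx0
    have hχx0 : χ x0 = ePi (-(2 * w i)) := by
      rw [hχ]
      simp only
      congr 2
      rw [Matrix.dotProduct_mulVec, ← hw]
      have hzc : zc x0 = Pi.single i 1 := by
        funext j
        rw [hx0, zc]
        by_cases hj : j = i
        · subst hj; simp
        · simp [Pi.single_apply, hj]
      rw [hzc, dotProduct_single, mul_one]
    have hne1 : χ x0 ≠ 1 := by
      rw [hχx0]
      intro h
      obtain ⟨z, hz⟩ := (ePi_eq_one_iff' _).1 h
      exact hi z hz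
    have hσ : ∀ j : Fin m, ∃ p : Fin m × Z2, γ j + x0 = γ p.1 + M.mulVec p.2 :=
      fun j => ⟨(hγ (γ j + x0)).choose, (hγ (γ j + x0)).choose_spec.1⟩
    choose p hp using hσ
    set σ : Fin m → Fin m := fun j => (p j).1 with hσdef
    have hinj : Function.Injective σ := by
      intro j j' hjj
      have h1 : γ j + x0 = γ (σ j') + M.mulVec (p j).2 := by rw [← hjj]; exact hp j
      have h2 : γ j' + x0 = γ (σ j') + M.mulVec (p j').2 := hp j'
      have e2 : γ j = γ j' + M.mulVec ((p j).2 - (p j').2) := by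
        rw [Matrix.mulVec_sub]
        linear_combination h1 - h2
      have e1 : γ j = γ (j, (0 : Z2)).1 + M.mulVec (j, (0 : Z2)).2 := by
        simp [Matrix.mulVec_zero]
      have e2' : γ j = γ (j', (p j).2 - (p j').2).1 + M.mulVec (j', (p j).2 - (p j').2).2 := e2
      have := (hγ (γ j)).unique e1 e2'
      exact congrArg Prod.fst this
    have hbij : Function.Bijective σ := Finite.injective_iff_bijective.1 hinj
    have hsum1 : ∑ j : Fin m, χ (γ (σ j)) = ∑ j : Fin m, χ (γ j) :=
      Fintype.sum_bijective σ hbij _ _ (fun j => rfl)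
    have hsum2 : ∀ j, χ (γ j) * χ x0 = χ (γ (σ j)) := by
      intro j
      rw [← χ_add, hp j, χ_add, χ_M, mul_one]
    have hS : (∑ j : Fin m, χ (γ j)) * χ x0 = ∑ j : Fin m, χ (γ j) := by
      rw [Finset.sum_mul]
      calc ∑ j : Fin m, χ (γ j) * χ x0 = ∑ j : Fin m, χ (γ (σ j)) :=
            Finset.sum_congr rfl fun j _ => hsum2 j
        _ = _ := hsum1
    have h0 : (∑ j : Fin m, χ (γ j)) * (χ x0 - 1) = 0 := by
      rw [mul_sub, hS, mul_one, sub_self]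
    exact (mul_eq_zero.1 h0).resolve_right (sub_ne_zero.2 hne1)

lemma stepA' (A B D : M2) (hB : B.det ≠ 0) (Mi : M2) (u : V2) (c : Z2 → ℂ) :
    ePi (-(((B * Mi).mulVec u) ⬝ᵥ ((D * Mi).mulVec u))) * DLCT A B D c ((B * Mi).mulVec u)
      = (sdet B)⁻¹ *
        ∑' n : Z2, c n * lam A B (zc n) * ePi (-(2 * (zc n ⬝ᵥ Mi.mulVec u))) := by
  have hBu : IsUnit B.det := isUnit_iff_ne_zero.2 hB
  have hDB : (D * B⁻¹) * (B * Mi) = D * Mi := by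
    rw [mul_assoc, ← mul_assoc B⁻¹, Matrix.nonsing_inv_mul _ hBu, one_mul]
  have hBB : B⁻¹ * (B * Mi) = Mi := by
    rw [← mul_assoc, Matrix.nonsing_inv_mul _ hBu, one_mul]
  rw [DLCT, ← mul_assoc, mul_comm (ePi _) (sdet B)⁻¹, mul_assoc, ← tsum_mul_left]
  congr 1
  refine tsum_congr fun n => ?_
  have hQd : Q (D * B⁻¹) ((B * Mi).mulVec u) ((B * Mi).mulVec u)
      = ((B * Mi).mulVec u) ⬝ᵥ ((D * Mi).mulVec u) := by
    rw [Q, Matrix.mulVec_mulVec, hDB]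
  have hQb : Q B⁻¹ (zc n) ((B * Mi).mulVec u) = zc n ⬝ᵥ Mi.mulVec u := by
    rw [Q, Matrix.mulVec_mulVec, hBB]
  rw [hQd, hQb, lam]
  set X : ℝ := ((B * Mi).mulVec u) ⬝ᵥ ((D * Mi).mulVec u) with hX
  set Qa : ℝ := Q (B⁻¹ * A) (zc n) (zc n) with hQa
  have hsplit : ePi (Qa - 2 * (zc n ⬝ᵥ Mi.mulVec u) + X)
      = ePi Qa * ePi (-(2 * (zc n ⬝ᵥ Mi.mulVec u))) * ePi X := by
    rw [← ePi_add', ← ePi_add']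
    ring_nf
  have hone : ePi (-X) * ePi X = 1 := by rw [← ePi_add', neg_add_cancel, ePi_zero']
  rw [hsplit]
  linear_combination (c n * ePi Qa * ePi (-(2 * (zc n ⬝ᵥ Mi.mulVec u)))) * hone

/-- Poisson-type summation formula in the 2D-DT-NS-LCT domain. -/
theorem poisson_dlct (A B C D : M2) (hSymp : Symp A B C D) (hB : B.det ≠ 0)
    (M : Matrix (Fin 2) (Fin 2) ℤ) (hM : M.det ≠ 0)
    (m : ℕ) (hm : m = M.det.natAbs)
    (γ : Fin m → Z2) (hγ0 : ∀ h : 0 < m, γ ⟨0, h⟩ = 0)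
    (hγ : ∀ n : Z2, ∃! p : Fin m × Z2, n = γ p.1 + M.mulVec p.2)
    (c : Z2 → ℂ) (hc : Summable fun k => ‖c k‖) :
    ∀ ξ : V2,
      (m : ℂ) / sdet B *
          DTFT (fun k => c (Mᵀ.mulVec k) * lam A B (zc (Mᵀ.mulVec k))) ξ =
        ∑ k : Fin m,
          ePi (-(((B * (Mr M)⁻¹).mulVec (ξ + zc (γ k))) ⬝ᵥ
                 ((D * (Mr M)⁻¹).mulVec (ξ + zc (γ k))))) *
            DLCT A B D c ((B * (Mr M)⁻¹).mulVec (ξ + zc (γ k))) := by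
  intro ξ
  classical
  have hMrdet : (Mr M).det ≠ 0 := by rw [Mr_det']; exact_mod_cast hM
  have hMu : IsUnit (Mr M).det := isUnit_iff_ne_zero.2 hMrdet
  have hMtu : IsUnit ((Mr M)ᵀ).det := by rwa [Matrix.det_transpose]
  have hFs : ∀ j : Fin m, Summable (fun n : Z2 => c n * lam A B (zc n) *
      ePi (-(2 * (zc n ⬝ᵥ (Mr M)⁻¹.mulVec (ξ + zc (γ j)))))) := by
    intro j
    apply Summable.of_norm
    have hnorm : (fun n : Z2 => ‖c n * lam A B (zc n) *
        ePi (-(2 * (zc n ⬝ᵥ (Mr M)⁻¹.mulVec (ξ + zc (γ j)))))‖) = fun n => ‖c n‖ := by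
      funext n
      simp only [norm_mul, lam, norm_ePi', mul_one]
    rwa [hnorm]
  have hswap : ∑ j : Fin m, ∑' n : Z2, (c n * lam A B (zc n) *
        ePi (-(2 * (zc n ⬝ᵥ (Mr M)⁻¹.mulVec (ξ + zc (γ j))))))
      = ∑' n : Z2, ∑ j : Fin m, (c n * lam A B (zc n) *
        ePi (-(2 * (zc n ⬝ᵥ (Mr M)⁻¹.mulVec (ξ + zc (γ j)))))) :=
    (hasSum_sum (fun j _ => (hFs j).hasSum)).tsum_eq.symm
  have hinner : ∀ n : Z2, ∑ j : Fin m, (c n * lam A B (zc n) *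
        ePi (-(2 * (zc n ⬝ᵥ (Mr M)⁻¹.mulVec (ξ + zc (γ j))))))
      = c n * lam A B (zc n) * ePi (-(2 * (zc n ⬝ᵥ (Mr M)⁻¹.mulVec ξ))) *
        (if ∃ k : Z2, n = Mᵀ.mulVec k then (m : ℂ) else 0) := by
    intro n
    have hsplit : ∀ j : Fin m, c n * lam A B (zc n) *
        ePi (-(2 * (zc n ⬝ᵥ (Mr M)⁻¹.mulVec (ξ + zc (γ j)))))
        = (c n * lam A B (zc n) * ePi (-(2 * (zc n ⬝ᵥ (Mr M)⁻¹.mulVec ξ)))) *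
          ePi (-(2 * (zc n ⬝ᵥ (Mr M)⁻¹.mulVec (zc (γ j))))) := by
      intro j
      rw [Matrix.mulVec_add, dotProduct_add,
        show -(2 * (zc n ⬝ᵥ (Mr M)⁻¹.mulVec ξ + zc n ⬝ᵥ (Mr M)⁻¹.mulVec (zc (γ j))))
          = -(2 * (zc n ⬝ᵥ (Mr M)⁻¹.mulVec ξ)) + -(2 * (zc n ⬝ᵥ (Mr M)⁻¹.mulVec (zc (γ j))))
          from by ring, ePi_add']
      ring
    rw [Finset.sum_congr rfl fun j _ => hsplit j, ← Finset.mul_sum,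
      char_sum' M hM m γ hγ n]
  have hfinj : Function.Injective (fun k : Z2 => Mᵀ.mulVec k) := by
    intro a b h
    have h2 : zc (Mᵀ.mulVec a) = zc (Mᵀ.mulVec b) := by
      show zc ((fun k : Z2 => Mᵀ.mulVec k) a) = zc ((fun k : Z2 => Mᵀ.mulVec k) b)
      rw [h]
    rw [zc_mulVec', zc_mulVec', Mr_transpose'] at h2
    have h3 : ((Mr M)ᵀ)⁻¹.mulVec ((Mr M)ᵀ.mulVec (zc a))
        = ((Mr M)ᵀ)⁻¹.mulVec ((Mr M)ᵀ.mulVec (zc b)) := by rw [h2]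
    rw [Matrix.mulVec_mulVec, Matrix.mulVec_mulVec, Matrix.nonsing_inv_mul _ hMtu,
      Matrix.one_mulVec, Matrix.one_mulVec] at h3
    exact zc_inj' h3
  have hsupp : Function.support (fun n : Z2 => c n * lam A B (zc n) *
        ePi (-(2 * (zc n ⬝ᵥ (Mr M)⁻¹.mulVec ξ))) *
        (if ∃ k : Z2, n = Mᵀ.mulVec k then (m : ℂ) else 0))
      ⊆ Set.range (fun k : Z2 => Mᵀ.mulVec k) := by
    intro n hn
    by_contra hcon
    apply hn
    have : ¬ (∃ k : Z2, n = Mᵀ.mulVec k) := by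
      rintro ⟨k, hk⟩
      exact hcon ⟨k, hk.symm⟩
    simp only [if_neg this, mul_zero]
  have htsum : ∑' k : Z2, (c (Mᵀ.mulVec k) * lam A B (zc (Mᵀ.mulVec k)) *
        ePi (-(2 * (zc (Mᵀ.mulVec k) ⬝ᵥ (Mr M)⁻¹.mulVec ξ))) *
        (if ∃ k' : Z2, Mᵀ.mulVec k = Mᵀ.mulVec k' then (m : ℂ) else 0))
      = ∑' n : Z2, (c n * lam A B (zc n) *
        ePi (-(2 * (zc n ⬝ᵥ (Mr M)⁻¹.mulVec ξ))) *
        (if ∃ k : Z2, n = Mᵀ.mulVec k then (m : ℂ) else 0)) :=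
    Function.Injective.tsum_eq hfinj hsupp
  have hgk : ∀ k : Z2, c (Mᵀ.mulVec k) * lam A B (zc (Mᵀ.mulVec k)) *
        ePi (-(2 * (zc (Mᵀ.mulVec k) ⬝ᵥ (Mr M)⁻¹.mulVec ξ))) *
        (if ∃ k' : Z2, Mᵀ.mulVec k = Mᵀ.mulVec k' then (m : ℂ) else 0)
      = (m : ℂ) * (c (Mᵀ.mulVec k) * lam A B (zc (Mᵀ.mulVec k)) *
          ePi (-(2 * (zc k ⬝ᵥ ξ)))) := by
    intro k
    rw [if_pos ⟨k, rfl⟩, dot_reduce' M hMu k ξ]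
    ring
  symm
  calc ∑ j : Fin m,
        ePi (-(((B * (Mr M)⁻¹).mulVec (ξ + zc (γ j))) ⬝ᵥ
               ((D * (Mr M)⁻¹).mulVec (ξ + zc (γ j))))) *
          DLCT A B D c ((B * (Mr M)⁻¹).mulVec (ξ + zc (γ j)))
      = ∑ j : Fin m, (sdet B)⁻¹ * ∑' n : Z2, (c n * lam A B (zc n) *
          ePi (-(2 * (zc n ⬝ᵥ (Mr M)⁻¹.mulVec (ξ + zc (γ j)))))) :=
        Finset.sum_congr rfl fun j _ => stepA' A B D hB (Mr M)⁻¹ (ξ + zc (γ j)) c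
    _ = (sdet B)⁻¹ * ∑ j : Fin m, ∑' n : Z2, (c n * lam A B (zc n) *
          ePi (-(2 * (zc n ⬝ᵥ (Mr M)⁻¹.mulVec (ξ + zc (γ j)))))) := by
        rw [Finset.mul_sum]
    _ = (sdet B)⁻¹ * ∑' n : Z2, (c n * lam A B (zc n) *
          ePi (-(2 * (zc n ⬝ᵥ (Mr M)⁻¹.mulVec ξ))) *
          (if ∃ k : Z2, n = Mᵀ.mulVec k then (m : ℂ) else 0)) := by
        rw [hswap, tsum_congr hinner]
    _ = (sdet B)⁻¹ * ∑' k : Z2, (c (Mᵀ.mulVec k) * lam A B (zc (Mᵀ.mulVec k)) *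
          ePi (-(2 * (zc (Mᵀ.mulVec k) ⬝ᵥ (Mr M)⁻¹.mulVec ξ))) *
          (if ∃ k' : Z2, Mᵀ.mulVec k = Mᵀ.mulVec k' then (m : ℂ) else 0)) := by
        rw [htsum]
    _ = (sdet B)⁻¹ * ∑' k : Z2, (m : ℂ) * (c (Mᵀ.mulVec k) * lam A B (zc (Mᵀ.mulVec k)) *
          ePi (-(2 * (zc k ⬝ᵥ ξ)))) := by
        rw [tsum_congr hgk]
    _ = (m : ℂ) / sdet B *
          DTFT (fun k => c (Mᵀ.mulVec k) * lam A B (zc (Mᵀ.mulVec k))) ξ := by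
        rw [tsum_mul_left, DTFT]
        ring
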